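/- Fix real constants b₀ < 0 and b₁, and let γ₁ denote the infimum of Re λ over all nonzero eigenvalues λ of the problem b₀y'' + b₁y' = λy, y(0) = y(1/2) = y(1). Then γ₁ = −4b₀π² − b₁²/(4b₀) when |b₁| ≤ −4√3·b₀π, and γ₁ = −16b₀π² when |b₁| > −4√3·b₀π. -/

import Mathlib

open Set

noncomputable section

/-- derivative of `t ↦ exp (μ t)` -/
lemma hasDerivAt_cexp_mul (μ : ℂ) (x : ℝ) :
    HasDerivAt (fun t : ℝ => Complex.exp (μ * t)) (μ * Complex.exp (μ * x)) x := by
  have h1 : HasDerivAt (fun t : ℝ => (t : ℂ)) 1 x := by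
    simpa using (hasDerivAt_id x).ofReal_comp
  have h2 : HasDerivAt (fun t : ℝ => μ * (t : ℂ)) μ x := by
    simpa using h1.const_mul μ
  simpa [mul_comm] using h2.cexp

/-- Gronwall uniqueness specialized to a linear ODE on `[0,1]`. -/
lemma ode_unique (L : (ℂ × ℂ) →L[ℝ] (ℂ × ℂ)) (f g : ℝ → ℂ × ℂ)
    (hf : ContinuousOn f (Icc 0 1))
    (hf' : ∀ t ∈ Ico (0:ℝ) 1, HasDerivWithinAt f (L (f t)) (Icc 0 1) t)
    (hg : ContinuousOn g (Icc 0 1))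
    (hg' : ∀ t ∈ Ico (0:ℝ) 1, HasDerivWithinAt g (L (g t)) (Icc 0 1) t)
    (h0 : f 0 = g 0) : EqOn f g (Icc 0 1) := by
  have hmem : ∀ t ∈ Ico (0:ℝ) 1, Icc (0:ℝ) 1 ∈ nhdsWithin t (Ici t) := by
    intro t ht
    have h1 : Ici t ∈ nhdsWithin t (Ici t) := self_mem_nhdsWithin
    have h2 : Iio (1:ℝ) ∈ nhdsWithin t (Ici t) :=
      nhdsWithin_le_nhds (Iio_mem_nhds ht.2)
    filter_upwards [h1, h2] with x hx1 hx2
    exact ⟨le_trans ht.1 hx1, le_of_lt hx2⟩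
  exact ODE_solution_unique_of_mem_Icc_right
    (v := fun _ z => L z) (s := fun _ => univ) (K := ‖L‖₊)
    (fun _ _ => (L.lipschitz).lipschitzOnWith)
    hf (fun t ht => (hf' t ht).mono_of_mem_nhdsWithin (hmem t ht)) (fun _ _ => mem_univ _)
    hg (fun t ht => (hg' t ht).mono_of_mem_nhdsWithin (hmem t ht)) (fun _ _ => mem_univ _)
    h0

section SolForm

variable {b₀ b₁ : ℝ} {lam : ℂ} {y : ℝ → ℂ}

/-- From the hypotheses of `IsEigC`, the pair `(y, y')` solves a linear first-order system. -/
lemma pair_solves (hb₀ : (b₀:ℂ) ≠ 0)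
    (hy : ContDiffOn ℝ 2 y (Icc 0 1))
    (hode : ∀ x ∈ Icc (0:ℝ) 1,
      (b₀:ℂ) * iteratedDerivWithin 2 y (Icc (0:ℝ) 1) x
        + (b₁:ℂ) * derivWithin y (Icc (0:ℝ) 1) x = lam * y x)
    (L : (ℂ × ℂ) →L[ℝ] (ℂ × ℂ))
    (hL : ∀ z : ℂ × ℂ, L z = (z.2, (lam / b₀) * z.1 - ((b₁:ℂ) / b₀) * z.2)) :
    ContinuousOn (fun t => (y t, derivWithin y (Icc 0 1) t) : ℝ → ℂ × ℂ) (Icc 0 1) ∧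
    ∀ t ∈ Ico (0:ℝ) 1,
      HasDerivWithinAt (fun t => (y t, derivWithin y (Icc 0 1) t) : ℝ → ℂ × ℂ)
        (L (y t, derivWithin y (Icc 0 1) t)) (Icc 0 1) t := by
  have hu : UniqueDiffOn ℝ (Icc (0:ℝ) 1) := uniqueDiffOn_Icc zero_lt_one
  set s : Set ℝ := Icc 0 1 with hs
  set y' := derivWithin y s with hy'def
  have hy1 : DifferentiableOn ℝ y s := hy.differentiableOn (by norm_num)
  have hy'c : ContDiffOn ℝ 1 y' s := hy.derivWithin hu (by norm_num)
  have hy'd : DifferentiableOn ℝ y' s := hy'c.differentiableOn (by norm_num)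
  have hiter : ∀ x ∈ s, iteratedDerivWithin 2 y s x = derivWithin y' s x := by
    intro x hx
    rw [iteratedDerivWithin_succ]
    exact derivWithin_congr (fun z hz => congrFun iteratedDerivWithin_one z)
      (congrFun iteratedDerivWithin_one x)
  refine ⟨(hy.continuousOn).prodMk (hy'c.continuousOn), ?_⟩
  intro t ht
  have htm : t ∈ s := ⟨ht.1, le_of_lt ht.2⟩
  have h1 : HasDerivWithinAt y (y' t) s t := (hy1 t htm).hasDerivWithinAt
  have h2 : HasDerivWithinAt y' (derivWithin y' s t) s t := (hy'd t htm).hasDerivWithinAt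
  have hval : derivWithin y' s t = (lam / b₀) * y t - ((b₁:ℂ) / b₀) * y' t := by
    have := hode t htm
    rw [hiter t htm] at this
    field_simp
    linear_combination this
  rw [hL]
  exact (h1.prodMk h2).congr_deriv (by rw [hval])

/-- The linear vector field as a continuous linear map. -/
def Lmap (b₀ b₁ : ℝ) (lam : ℂ) : (ℂ × ℂ) →L[ℝ] (ℂ × ℂ) :=
  (((ContinuousLinearMap.snd ℂ ℂ ℂ).prod
    ((lam / b₀) • ContinuousLinearMap.fst ℂ ℂ ℂ
      + (-(b₁:ℂ) / b₀) • ContinuousLinearMap.snd ℂ ℂ ℂ)).restrictScalars ℝ)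

lemma Lmap_apply (b₀ b₁ : ℝ) (lam : ℂ) (z : ℂ × ℂ) :
    Lmap b₀ b₁ lam z = (z.2, (lam / b₀) * z.1 - ((b₁:ℂ) / b₀) * z.2) := by
  simp [Lmap, smul_eq_mul]
  ring

lemma form_distinct (hb₀ : (b₀:ℂ) ≠ 0) {μ₁ μ₂ : ℂ}
    (h₁ : (b₀:ℂ) * μ₁ ^ 2 + (b₁:ℂ) * μ₁ = lam)
    (h₂ : (b₀:ℂ) * μ₂ ^ 2 + (b₁:ℂ) * μ₂ = lam) (hne : μ₁ ≠ μ₂)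
    (hy : ContDiffOn ℝ 2 y (Icc 0 1))
    (hode : ∀ x ∈ Icc (0:ℝ) 1,
      (b₀:ℂ) * iteratedDerivWithin 2 y (Icc (0:ℝ) 1) x
        + (b₁:ℂ) * derivWithin y (Icc (0:ℝ) 1) x = lam * y x) :
    ∃ A B : ℂ, ∀ x ∈ Icc (0:ℝ) 1,
      y x = A * Complex.exp (μ₁ * x) + B * Complex.exp (μ₂ * x) := by
  obtain ⟨hfc, hf'⟩ := pair_solves hb₀ hy hode (Lmap b₀ b₁ lam) (Lmap_apply b₀ b₁ lam)
  set s : Set ℝ := Icc 0 1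
  set y' := derivWithin y s
  have hd : μ₁ - μ₂ ≠ 0 := sub_ne_zero.mpr hne
  set A : ℂ := (y' 0 - μ₂ * y 0) / (μ₁ - μ₂) with hA
  set B : ℂ := (μ₁ * y 0 - y' 0) / (μ₁ - μ₂) with hB
  set g : ℝ → ℂ × ℂ := fun t =>
    (A * Complex.exp (μ₁ * t) + B * Complex.exp (μ₂ * t),
     A * μ₁ * Complex.exp (μ₁ * t) + B * μ₂ * Complex.exp (μ₂ * t)) with hg
  have hgd : ∀ t : ℝ, HasDerivAt g
      (A * μ₁ * Complex.exp (μ₁ * t) + B * μ₂ * Complex.exp (μ₂ * t),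
       A * μ₁ ^ 2 * Complex.exp (μ₁ * t) + B * μ₂ ^ 2 * Complex.exp (μ₂ * t)) t := by
    intro t
    apply HasDerivAt.prodMk
    · have := ((hasDerivAt_cexp_mul μ₁ t).const_mul A).add
        ((hasDerivAt_cexp_mul μ₂ t).const_mul B)
      exact this.congr_deriv (by ring)
    · have := ((hasDerivAt_cexp_mul μ₁ t).const_mul (A * μ₁)).add
        ((hasDerivAt_cexp_mul μ₂ t).const_mul (B * μ₂))
      exact this.congr_deriv (by ring)
  have hg' : ∀ t ∈ Ico (0:ℝ) 1, HasDerivWithinAt g (Lmap b₀ b₁ lam (g t)) s t := by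
    intro t ht
    refine ((hgd t).hasDerivWithinAt).congr_deriv ?_
    rw [Lmap_apply]
    refine Prod.ext (by simp [hg]) ?_
    simp only [hg]
    field_simp
    linear_combination (norm := ring_nf) (A * Complex.exp (μ₁ * t)) * h₁ + (B * Complex.exp (μ₂ * t)) * h₂
  have e1 : A + B = y 0 := by rw [hA, hB]; field_simp; ring
  have e2 : A * μ₁ + B * μ₂ = y' 0 := by rw [hA, hB]; field_simp; ring
  have h0 : ((y 0, y' 0) : ℂ × ℂ) = g 0 := by
    refine Prod.ext ?_ ?_ <;> simp only [hg] <;> push_cast <;>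
      simp only [mul_zero, Complex.exp_zero, mul_one]
    · linear_combination -e1
    · linear_combination -e2
  have hgc : Continuous g := continuous_iff_continuousAt.mpr fun t => (hgd t).continuousAt
  have := ode_unique (Lmap b₀ b₁ lam) _ g hfc hf' hgc.continuousOn hg' h0
  exact ⟨A, B, fun x hx => congrArg Prod.fst (this hx)⟩

lemma form_repeated (hb₀ : (b₀:ℂ) ≠ 0) {μ : ℂ}
    (h₁ : (b₀:ℂ) * μ ^ 2 + (b₁:ℂ) * μ = lam)
    (hsum : 2 * (b₀:ℂ) * μ = -(b₁:ℂ))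
    (hy : ContDiffOn ℝ 2 y (Icc 0 1))
    (hode : ∀ x ∈ Icc (0:ℝ) 1,
      (b₀:ℂ) * iteratedDerivWithin 2 y (Icc (0:ℝ) 1) x
        + (b₁:ℂ) * derivWithin y (Icc (0:ℝ) 1) x = lam * y x) :
    ∃ A B : ℂ, ∀ x ∈ Icc (0:ℝ) 1,
      y x = (A + B * x) * Complex.exp (μ * x) := by
  obtain ⟨hfc, hf'⟩ := pair_solves hb₀ hy hode (Lmap b₀ b₁ lam) (Lmap_apply b₀ b₁ lam)
  set s : Set ℝ := Icc 0 1
  set y' := derivWithin y s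
  set A : ℂ := y 0 with hA
  set B : ℂ := y' 0 - μ * y 0 with hB
  set g : ℝ → ℂ × ℂ := fun t =>
    ((A + B * t) * Complex.exp (μ * t),
     (A * μ + B + B * μ * t) * Complex.exp (μ * t)) with hg
  have hgd : ∀ t : ℝ, HasDerivAt g
      ((A * μ + B + B * μ * t) * Complex.exp (μ * t),
       (A * μ ^ 2 + 2 * B * μ + B * μ ^ 2 * t) * Complex.exp (μ * t)) t := by
    intro t
    have hid : HasDerivAt (fun t : ℝ => (t : ℂ)) 1 t := by
      simpa using (hasDerivAt_id t).ofReal_comp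
    apply HasDerivAt.prodMk
    · have := (((hid.const_mul B).const_add A).mul (hasDerivAt_cexp_mul μ t))
      exact this.congr_deriv (by ring)
    · have := ((((hid.const_mul (B * μ)).const_add (A * μ + B))).mul
        (hasDerivAt_cexp_mul μ t))
      exact this.congr_deriv (by ring)
  have hg' : ∀ t ∈ Ico (0:ℝ) 1, HasDerivWithinAt g (Lmap b₀ b₁ lam (g t)) s t := by
    intro t ht
    refine ((hgd t).hasDerivWithinAt).congr_deriv ?_
    rw [Lmap_apply]
    refine Prod.ext (by simp [hg]) ?_
    simp only [hg]
    field_simp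
    linear_combination (A + B * t) * h₁
      + B * hsum
  have h0 : ((y 0, y' 0) : ℂ × ℂ) = g 0 := by
    refine Prod.ext ?_ ?_ <;> simp only [hg] <;> push_cast <;>
      simp only [mul_zero, Complex.exp_zero, mul_one, add_zero]
    rfl
    rw [hB]; ring
  have hgc : Continuous g := continuous_iff_continuousAt.mpr fun t => (hgd t).continuousAt
  have := ode_unique (Lmap b₀ b₁ lam) _ g hfc hf' hgc.continuousOn hg' h0
  exact ⟨A, B, fun x hx => congrArg Prod.fst (this hx)⟩

end SolForm

/-- `lam` is an eigenvalue of the problem `b₀ y'' + b₁ y' = lam y`,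
`y(0) = y(1/2) = y(1)`. -/
def IsEigC (b₀ b₁ : ℝ) (lam : ℂ) : Prop :=
  ∃ y : ℝ → ℂ, ContDiffOn ℝ 2 y (Icc 0 1) ∧
    (∀ x ∈ Icc (0:ℝ) 1,
      (b₀ : ℂ) * iteratedDerivWithin 2 y (Icc (0:ℝ) 1) x +
        (b₁ : ℂ) * derivWithin y (Icc (0:ℝ) 1) x = lam * y x) ∧
    (∃ x ∈ Icc (0:ℝ) 1, y x ≠ 0) ∧ y 0 = y (1 / 2) ∧ y (1 / 2) = y 1

lemma exp_at_zero (μ : ℂ) : Complex.exp (μ * ((0:ℝ):ℂ)) = 1 := by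
  norm_num [Complex.exp_zero]

lemma exp_at_half (μ : ℂ) : Complex.exp (μ * (((1:ℝ)/2:ℝ):ℂ)) = Complex.exp (μ/2) := by
  norm_num; ring_nf

lemma exp_at_one (μ : ℂ) : Complex.exp (μ * ((1:ℝ):ℂ)) = Complex.exp (μ/2) ^ 2 := by
  rw [sq, ← Complex.exp_add]; norm_num

lemma root_exp_one {b₀ b₁ : ℝ} {lam μ : ℂ} (h₁ : (b₀:ℂ) * μ^2 + (b₁:ℂ) * μ = lam)
    (hlam : lam ≠ 0) (hc : Complex.exp (μ/2) = 1) :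
    ∃ k : ℤ, k ≠ 0 ∧ lam.re = -16 * Real.pi ^ 2 * (k:ℝ) ^ 2 * b₀ := by
  obtain ⟨n, hn⟩ := Complex.exp_eq_one_iff.mp hc
  have hμ : μ = (n:ℂ) * (4 * Real.pi * Complex.I) := by linear_combination 2 * hn
  have hn0 : n ≠ 0 := by
    rintro rfl
    exact hlam (by rw [← h₁, hμ]; push_cast; ring)
  refine ⟨n, hn0, ?_⟩
  have hval : lam = ((-16 * Real.pi ^ 2 * (n:ℝ) ^ 2 * b₀ : ℝ) : ℂ)
      + ((4 * Real.pi * (n:ℝ) * b₁ : ℝ) : ℂ) * Complex.I := by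
    rw [← h₁, hμ]; push_cast
    linear_combination (16 * (Real.pi:ℂ) ^ 2 * (n:ℂ) ^ 2 * (b₀:ℂ)) * Complex.I_sq
  rw [hval, Complex.add_re, Complex.ofReal_re, Complex.mul_re, Complex.ofReal_re,
    Complex.ofReal_im, Complex.I_re, Complex.I_im]; ring

lemma eig_classify {b₀ b₁ : ℝ} (hb₀ : b₀ ≠ 0) {lam : ℂ} (hlam : lam ≠ 0)
    (h : IsEigC b₀ b₁ lam) :
    ∃ k : ℤ, k ≠ 0 ∧ (lam.re = -16 * Real.pi ^ 2 * (k:ℝ) ^ 2 * b₀ ∨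
      lam.re = -b₁ ^ 2 / (4 * b₀) - 4 * Real.pi ^ 2 * (k:ℝ) ^ 2 * b₀) := by
  obtain ⟨y, hy, hode, ⟨x₀, hx₀, hx₀ne⟩, hbc1, hbc2⟩ := h
  have hb₀c : (b₀:ℂ) ≠ 0 := Complex.ofReal_ne_zero.mpr hb₀
  have m0 : (0:ℝ) ∈ Icc (0:ℝ) 1 := by norm_num
  have mh : (1/2:ℝ) ∈ Icc (0:ℝ) 1 := by norm_num
  have m1 : (1:ℝ) ∈ Icc (0:ℝ) 1 := by norm_num
  by_cases hD : (b₁:ℂ)^2 + 4 * b₀ * lam = 0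
  · -- repeated root : impossible
    exfalso
    have h₁ : (b₀:ℂ) * (-(b₁:ℂ)/(2*b₀))^2 + (b₁:ℂ) * (-(b₁:ℂ)/(2*b₀)) = lam := by
      field_simp
      linear_combination (-1:ℂ) * hD
    have hsum : 2*(b₀:ℂ)*(-(b₁:ℂ)/(2*b₀)) = -(b₁:ℂ) := by field_simp
    obtain ⟨A, B, hform⟩ := form_repeated hb₀c h₁ hsum hy hode
    set μ : ℂ := -(b₁:ℂ)/(2*b₀) with hμdef
    set c : ℂ := Complex.exp (μ/2) with hcdef
    have hc0 : c ≠ 0 := Complex.exp_ne_zero _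
    have hy0 : y 0 = A := by
      rw [hform 0 m0]; push_cast; simp
    have hyh : y (1/2) = (A + B/2) * c := by
      rw [hform (1/2) mh, exp_at_half, hcdef]; push_cast; ring
    have hy1 : y 1 = (A + B) * c^2 := by
      rw [hform 1 m1, exp_at_one, hcdef]; push_cast; ring
    have eq1 : (c - 1) * A + (c/2) * B = 0 := by
      have := hbc1; rw [hy0, hyh] at this; linear_combination -this
    have eq2 : (c^2 - 1) * A + c^2 * B = 0 := by
      have := hbc1.trans hbc2; rw [hy0, hy1] at this; linear_combination -this
    by_cases hc1 : c = 1
    · obtain ⟨n, hn⟩ := Complex.exp_eq_one_iff.mp (hcdef.symm.trans hc1)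
      have hμim : (μ/2).im = 0 := by
        rw [hμdef]
        have : -(b₁:ℂ)/(2*b₀)/2 = ((-b₁/(2*b₀)/2 : ℝ) : ℂ) := by push_cast; ring
        rw [this, Complex.ofReal_im]
      have hprod : (n:ℝ) * (2*Real.pi) = 0 := by
        have him := congrArg Complex.im hn
        rw [hμim] at him
        simpa using him.symm
      have hn0 : (n:ℝ) = 0 := by
        rcases mul_eq_zero.mp hprod with h | h
        · exact h
        · exact absurd h (by positivity)
      have hμ0 : μ = 0 := by
        have : (n:ℂ) = 0 := by exact_mod_cast hn0
        rw [this] at hn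
        linear_combination 2 * hn
      exact hlam (by rw [← h₁, hμ0]; ring)
    · have hdet : c * (c-1)^2 / 2 ≠ 0 := by
        apply div_ne_zero (mul_ne_zero hc0 (pow_ne_zero _ (sub_ne_zero.mpr hc1)))
        norm_num
      have hA0 : A = 0 := by
        have hAz : A * (c * (c-1)^2 / 2) = 0 := by
          linear_combination c^2 * eq1 - (c/2) * eq2
        exact (mul_eq_zero.mp hAz).resolve_right hdet
      have hB0 : B = 0 := by
        have hBz : B * (c * (c-1)^2 / 2) = 0 := by
          linear_combination (c-1) * eq2 - (c^2-1) * eq1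
        exact (mul_eq_zero.mp hBz).resolve_right hdet
      exact hx₀ne (by rw [hform x₀ hx₀, hA0, hB0]; ring)
  · -- distinct roots
    obtain ⟨d, hd⟩ := IsAlgClosed.exists_pow_nat_eq ((b₁:ℂ)^2 + 4 * b₀ * lam) (n := 2)
      (by norm_num)
    have hdne : d ≠ 0 := by
      intro hz; exact hD (by rw [← hd, hz]; ring)
    have h₁ : (b₀:ℂ) * ((-(b₁:ℂ) + d)/(2*b₀))^2 + (b₁:ℂ) * ((-(b₁:ℂ) + d)/(2*b₀)) = lam := by
      field_simp
      linear_combination hd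
    have h₂ : (b₀:ℂ) * ((-(b₁:ℂ) - d)/(2*b₀))^2 + (b₁:ℂ) * ((-(b₁:ℂ) - d)/(2*b₀)) = lam := by
      field_simp
      linear_combination hd
    set μ₁ : ℂ := (-(b₁:ℂ) + d)/(2*b₀) with hμ₁def
    set μ₂ : ℂ := (-(b₁:ℂ) - d)/(2*b₀) with hμ₂def
    have hdiff : μ₁ - μ₂ = d / b₀ := by rw [hμ₁def, hμ₂def]; field_simp; ring
    have hne : μ₁ ≠ μ₂ := by
      intro hz
      apply hdne
      have : d / (b₀:ℂ) = 0 := by rw [← hdiff, hz]; ring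
      exact (div_eq_zero_iff.mp this).resolve_right hb₀c
    obtain ⟨A, B, hform⟩ := form_distinct hb₀c h₁ h₂ hne hy hode
    set c₁ : ℂ := Complex.exp (μ₁/2) with hc₁def
    set c₂ : ℂ := Complex.exp (μ₂/2) with hc₂def
    have hy0 : y 0 = A + B := by
      rw [hform 0 m0]; push_cast; simp
    have hyh : y (1/2) = A * c₁ + B * c₂ := by
      rw [hform (1/2) mh, exp_at_half, exp_at_half, hc₁def, hc₂def]
    have hy1 : y 1 = A * c₁^2 + B * c₂^2 := by
      rw [hform 1 m1, exp_at_one, exp_at_one, hc₁def, hc₂def]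
    have eq1 : (c₁ - 1) * A + (c₂ - 1) * B = 0 := by
      have := hbc1; rw [hy0, hyh] at this; linear_combination -this
    have eq2 : (c₁^2 - 1) * A + (c₂^2 - 1) * B = 0 := by
      have := hbc1.trans hbc2; rw [hy0, hy1] at this; linear_combination -this
    have hAB : ¬ (A = 0 ∧ B = 0) := by
      rintro ⟨rfl, rfl⟩
      exact hx₀ne (by rw [hform x₀ hx₀]; ring)
    have hdet : (c₁ - 1) * ((c₂ - 1) * (c₂ - c₁)) = 0 := by
      by_contra hdz
      apply hAB
      constructor
      · have : A * ((c₁ - 1) * ((c₂ - 1) * (c₂ - c₁))) = 0 := by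
          linear_combination (c₂^2 - 1) * eq1 - (c₂ - 1) * eq2
        exact (mul_eq_zero.mp this).resolve_right hdz
      · have : B * ((c₁ - 1) * ((c₂ - 1) * (c₂ - c₁))) = 0 := by
          linear_combination (c₁ - 1) * eq2 - (c₁^2 - 1) * eq1
        exact (mul_eq_zero.mp this).resolve_right hdz
    rcases mul_eq_zero.mp hdet with hcase | hcase'
    · -- c₁ = 1
      obtain ⟨k, hk, hre⟩ := root_exp_one h₁ hlam (hc₁def ▸ sub_eq_zero.mp hcase)
      exact ⟨k, hk, Or.inl hre⟩
    rcases mul_eq_zero.mp hcase' with hcase | hcase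
    · -- c₂ = 1
      obtain ⟨k, hk, hre⟩ := root_exp_one h₂ hlam (hc₂def ▸ sub_eq_zero.mp hcase)
      exact ⟨k, hk, Or.inl hre⟩
    · -- c₂ = c₁
      have hcc : Complex.exp (μ₁/2 - μ₂/2) = 1 := by
        rw [Complex.exp_sub, ← hc₁def, ← hc₂def, sub_eq_zero.mp hcase]
        exact div_self (Complex.exp_ne_zero _)
      obtain ⟨n, hn⟩ := Complex.exp_eq_one_iff.mp hcc
      have hμd : μ₁ - μ₂ = (n:ℂ) * (4 * Real.pi * Complex.I) := by linear_combination 2 * hn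
      have hn0 : n ≠ 0 := by
        rintro rfl
        apply hne
        have h0 : μ₁ - μ₂ = 0 := by rw [hμd]; push_cast; ring
        exact sub_eq_zero.mp h0
      have hdval : d = (n:ℂ) * (4 * Real.pi * Complex.I) * b₀ := by
        have h := hdiff.symm.trans hμd
        rwa [div_eq_iff hb₀c] at h
      have hkey : (b₁:ℂ)^2 + 4 * b₀ * lam = -16 * Real.pi^2 * (n:ℂ)^2 * b₀^2 := by
        rw [← hd, hdval]
        linear_combination (16 * (Real.pi:ℂ)^2 * (n:ℂ)^2 * (b₀:ℂ)^2) * Complex.I_sq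
      refine ⟨n, hn0, Or.inr ?_⟩
      have hlamval : lam = (((-b₁^2 - 16*Real.pi^2*(n:ℝ)^2*b₀^2)/(4*b₀) : ℝ) : ℂ) := by
        push_cast
        rw [eq_div_iff (mul_ne_zero (by norm_num) hb₀c : (4:ℂ)*(b₀:ℂ) ≠ 0)]
        linear_combination hkey
      rw [hlamval, Complex.ofReal_re]
      field_simp
      ring

lemma ode_check {y y1 y2 : ℝ → ℂ}
    (h1 : ∀ x, HasDerivAt y (y1 x) x) (h2 : ∀ x, HasDerivAt y1 (y2 x) x) :
    ∀ x ∈ Icc (0:ℝ) 1, derivWithin y (Icc 0 1) x = y1 x ∧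
      iteratedDerivWithin 2 y (Icc (0:ℝ) 1) x = y2 x := by
  have hu : UniqueDiffOn ℝ (Icc (0:ℝ) 1) := uniqueDiffOn_Icc zero_lt_one
  have hd1 : ∀ z ∈ Icc (0:ℝ) 1, derivWithin y (Icc 0 1) z = y1 z := fun z hz =>
    ((h1 z).hasDerivWithinAt).derivWithin (hu z hz)
  intro x hx
  refine ⟨hd1 x hx, ?_⟩
  rw [iteratedDerivWithin_succ]
  have heq : derivWithin (iteratedDerivWithin 1 y (Icc 0 1)) (Icc 0 1) x
      = derivWithin y1 (Icc 0 1) x := derivWithin_congr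
      (fun z hz => by rw [iteratedDerivWithin_one, hd1 z hz])
      (by rw [iteratedDerivWithin_one, hd1 x hx])
  rw [heq, ((h2 x).hasDerivWithinAt).derivWithin (hu x hx)]

lemma contDiff_cexp_mul (μ : ℂ) : ContDiff ℝ 2 (fun x : ℝ => Complex.exp (μ * x)) :=
  (contDiff_const.mul Complex.ofRealCLM.contDiff).cexp

/-- the eigenfunction `exp (4 π i x)` -/
lemma eig_memA (b₀ b₁ : ℝ) :
    IsEigC b₀ b₁ ((b₀:ℂ) * (4*Real.pi*Complex.I)^2 + (b₁:ℂ) * (4*Real.pi*Complex.I)) := by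
  set μ : ℂ := 4*Real.pi*Complex.I with hμ
  refine ⟨fun x : ℝ => Complex.exp (μ * x), (contDiff_cexp_mul μ).contDiffOn, ?_, ?_, ?_, ?_⟩
  · intro x hx
    obtain ⟨e1, e2⟩ := ode_check (y1 := fun x : ℝ => μ * Complex.exp (μ * x))
      (y2 := fun x : ℝ => μ * (μ * Complex.exp (μ * x)))
      (fun x => hasDerivAt_cexp_mul μ x)
      (fun x => (hasDerivAt_cexp_mul μ x).const_mul μ) x hx
    rw [e1, e2]; ring
  · exact ⟨0, by norm_num, by simp [Complex.exp_ne_zero]⟩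
  · show Complex.exp (μ * ((0:ℝ):ℂ)) = Complex.exp (μ * ((1/2:ℝ):ℂ))
    push_cast
    rw [mul_zero, Complex.exp_zero,
      show μ * (1/2 : ℂ) = 2*Real.pi*Complex.I from by rw [hμ]; ring,
      Complex.exp_two_pi_mul_I]
  · show Complex.exp (μ * ((1/2:ℝ):ℂ)) = Complex.exp (μ * ((1:ℝ):ℂ))
    push_cast
    rw [show μ * (1/2 : ℂ) = 2*Real.pi*Complex.I from by rw [hμ]; ring,
      show μ * (1 : ℂ) = 2*Real.pi*Complex.I + 2*Real.pi*Complex.I from by rw [hμ]; ring,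
      Complex.exp_add, Complex.exp_two_pi_mul_I, mul_one]

/-- the eigenfunction `exp (μ₁ x) - exp (μ₂ x)` for the real eigenvalue -/
lemma eig_memB (b₀ b₁ : ℝ) (hb₀ : b₀ ≠ 0) :
    IsEigC b₀ b₁ ((-4*b₀*Real.pi^2 - b₁^2/(4*b₀) : ℝ) : ℂ) := by
  have hb₀c : (b₀:ℂ) ≠ 0 := Complex.ofReal_ne_zero.mpr hb₀
  set lam : ℂ := ((-4*b₀*Real.pi^2 - b₁^2/(4*b₀) : ℝ) : ℂ) with hlamdef
  set μ₁ : ℂ := ((-b₁/(2*b₀) : ℝ) : ℂ) + 2*Real.pi*Complex.I with hμ₁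
  set μ₂ : ℂ := ((-b₁/(2*b₀) : ℝ) : ℂ) - 2*Real.pi*Complex.I with hμ₂
  have h₁ : (b₀:ℂ) * μ₁^2 + (b₁:ℂ) * μ₁ = lam := by
    rw [hμ₁, hlamdef]; push_cast; field_simp
    linear_combination (64*(b₀:ℂ)^2*(Real.pi:ℂ)^2) * Complex.I_sq
  have h₂ : (b₀:ℂ) * μ₂^2 + (b₁:ℂ) * μ₂ = lam := by
    rw [hμ₂, hlamdef]; push_cast; field_simp
    linear_combination (64*(b₀:ℂ)^2*(Real.pi:ℂ)^2) * Complex.I_sq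
  refine ⟨fun x : ℝ => Complex.exp (μ₁ * x) - Complex.exp (μ₂ * x),
    ((contDiff_cexp_mul μ₁).sub (contDiff_cexp_mul μ₂)).contDiffOn, ?_, ?_, ?_, ?_⟩
  · intro x hx
    obtain ⟨e1, e2⟩ := ode_check
      (y1 := fun x : ℝ => μ₁ * Complex.exp (μ₁ * x) - μ₂ * Complex.exp (μ₂ * x))
      (y2 := fun x : ℝ => μ₁ * (μ₁ * Complex.exp (μ₁ * x)) - μ₂ * (μ₂ * Complex.exp (μ₂ * x)))
      (fun x => (hasDerivAt_cexp_mul μ₁ x).sub (hasDerivAt_cexp_mul μ₂ x))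
      (fun x => ((hasDerivAt_cexp_mul μ₁ x).const_mul μ₁).sub
        ((hasDerivAt_cexp_mul μ₂ x).const_mul μ₂)) x hx
    erw [e1, e2]
    linear_combination Complex.exp (μ₁ * x) * h₁ - Complex.exp (μ₂ * x) * h₂
  · refine ⟨1/4, by norm_num, ?_⟩
    show Complex.exp (μ₁ * ((1/4:ℝ):ℂ)) - Complex.exp (μ₂ * ((1/4:ℝ):ℂ)) ≠ 0
    push_cast
    rw [show μ₁ * (1/4 : ℂ) = μ₂ * (1/4 : ℂ) + Real.pi*Complex.I from by
        rw [hμ₁, hμ₂]; ring,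
      Complex.exp_add, Complex.exp_pi_mul_I]
    have hne := Complex.exp_ne_zero (μ₂ * (1/4 : ℂ))
    intro hcon
    apply hne
    have h2 : Complex.exp (μ₂ * (1/4:ℂ)) * (-2) = 0 := by linear_combination hcon
    simpa using h2
  · show Complex.exp (μ₁ * ((0:ℝ):ℂ)) - Complex.exp (μ₂ * ((0:ℝ):ℂ))
      = Complex.exp (μ₁ * ((1/2:ℝ):ℂ)) - Complex.exp (μ₂ * ((1/2:ℝ):ℂ))
    push_cast
    rw [show μ₁ * (1/2 : ℂ) = μ₂ * (1/2 : ℂ) + 2*Real.pi*Complex.I from by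
        rw [hμ₁, hμ₂]; ring,
      Complex.exp_add, Complex.exp_two_pi_mul_I, mul_one, mul_zero]
    ring
  · show Complex.exp (μ₁ * ((1/2:ℝ):ℂ)) - Complex.exp (μ₂ * ((1/2:ℝ):ℂ))
      = Complex.exp (μ₁ * ((1:ℝ):ℂ)) - Complex.exp (μ₂ * ((1:ℝ):ℂ))
    push_cast
    rw [show μ₁ * (1/2 : ℂ) = μ₂ * (1/2 : ℂ) + 2*Real.pi*Complex.I from by
        rw [hμ₁, hμ₂]; ring,
      show μ₁ * (1 : ℂ) = μ₂ * (1 : ℂ) + (2*Real.pi*Complex.I + 2*Real.pi*Complex.I) from by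
        rw [hμ₁, hμ₂]; ring]
    simp only [Complex.exp_add, Complex.exp_two_pi_mul_I]
    ring

theorem stmt19 (b₀ b₁ : ℝ) (hb₀ : b₀ < 0) :
    letI γ₁ : ℝ := sInf {r : ℝ | ∃ lam : ℂ, lam ≠ 0 ∧ IsEigC b₀ b₁ lam ∧ r = lam.re}
    (|b₁| ≤ -4 * Real.sqrt 3 * b₀ * Real.pi →
      γ₁ = -4 * b₀ * Real.pi ^ 2 - b₁ ^ 2 / (4 * b₀)) ∧
    (|b₁| > -4 * Real.sqrt 3 * b₀ * Real.pi →
      γ₁ = -16 * b₀ * Real.pi ^ 2) := by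
  have hπ := Real.pi_pos
  have hb₀ne : b₀ ≠ 0 := ne_of_lt hb₀
  have h3 : Real.sqrt 3 ^ 2 = 3 := Real.sq_sqrt (by norm_num)
  have h3nn : 0 ≤ Real.sqrt 3 := Real.sqrt_nonneg 3
  set S : Set ℝ := {r : ℝ | ∃ lam : ℂ, lam ≠ 0 ∧ IsEigC b₀ b₁ lam ∧ r = lam.re} with hS
  set q : ℝ := b₁^2/(4*b₀) with hqdef
  have h4b : (4:ℝ)*b₀ < 0 := by linarith
  -- the real eigenvalue -4 b₀ π² - q belongs to S
  have hpp : (0:ℝ) < Real.pi^2 := by positivity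
  have hBpos : 0 < -4*b₀*Real.pi^2 - q := by
    have h1 : 0 < (-b₀) * Real.pi^2 := mul_pos (neg_pos.mpr hb₀) hpp
    have h2 : q ≤ 0 := by
      rw [hqdef]
      apply div_nonpos_of_nonneg_of_nonpos (sq_nonneg _) (le_of_lt h4b)
    nlinarith
  have hmemB : (-4*b₀*Real.pi^2 - b₁^2/(4*b₀)) ∈ S := by
    refine ⟨((-4*b₀*Real.pi^2 - b₁^2/(4*b₀) : ℝ) : ℂ),
      Complex.ofReal_ne_zero.mpr (ne_of_gt hBpos), eig_memB b₀ b₁ hb₀ne, ?_⟩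
    rw [Complex.ofReal_re]
  -- the eigenvalue with real part -16 b₀ π²
  have hAval : ((b₀:ℂ) * (4*Real.pi*Complex.I)^2 + (b₁:ℂ) * (4*Real.pi*Complex.I)).re
      = -16*Real.pi^2*b₀ := by
    have hval : (b₀:ℂ) * (4*Real.pi*Complex.I)^2 + (b₁:ℂ) * (4*Real.pi*Complex.I)
        = ((-16*Real.pi^2*b₀ : ℝ):ℂ) + ((4*Real.pi*b₁ : ℝ):ℂ)*Complex.I := by
      push_cast
      linear_combination (16*(Real.pi:ℂ)^2*(b₀:ℂ)) * Complex.I_sq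
    rw [hval, Complex.add_re, Complex.ofReal_re, Complex.mul_re, Complex.ofReal_re,
      Complex.ofReal_im, Complex.I_re, Complex.I_im]; ring
  have hApos : 0 < -16*Real.pi^2*b₀ := by
    have h1 : 0 < (-b₀) * Real.pi^2 := mul_pos (neg_pos.mpr hb₀) hpp
    nlinarith
  have hmemA : (-16*b₀*Real.pi^2) ∈ S := by
    refine ⟨(b₀:ℂ) * (4*Real.pi*Complex.I)^2 + (b₁:ℂ) * (4*Real.pi*Complex.I), ?_,
      eig_memA b₀ b₁, by rw [hAval]; ring⟩
    intro h0
    rw [h0] at hAval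
    simp at hAval
    exact hb₀ne hAval
  -- lower bounds via classification
  have hclass : ∀ r ∈ S, ∃ k : ℤ, k ≠ 0 ∧
      (r = -16 * Real.pi ^ 2 * (k:ℝ) ^ 2 * b₀ ∨
       r = -b₁ ^ 2 / (4 * b₀) - 4 * Real.pi ^ 2 * (k:ℝ) ^ 2 * b₀) := by
    rintro r ⟨lam, hne, heig, rfl⟩
    exact eig_classify hb₀ne hne heig
  have hk1 : ∀ k : ℤ, k ≠ 0 → (1:ℝ) ≤ (k:ℝ)^2 := by
    intro k hk
    have hsq : k^2 ≠ 0 := pow_ne_zero 2 hk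
    have h0 : 0 < k^2 := lt_of_le_of_ne (sq_nonneg k) (Ne.symm hsq)
    have h1 : (1:ℤ) ≤ k^2 := by omega
    exact_mod_cast h1
  have hq4 : q * (4*b₀) = b₁^2 := div_mul_cancel₀ _ (ne_of_lt h4b)
  constructor
  · intro hle
    have hb1sq : b₁^2 ≤ 48*b₀^2*Real.pi^2 := by
      have h1 : |b₁| * |b₁| ≤ (-4*Real.sqrt 3*b₀*Real.pi) * (-4*Real.sqrt 3*b₀*Real.pi) :=
        mul_self_le_mul_self (abs_nonneg b₁) hle
      nlinarith [h1, _root_.sq_abs b₁, h3]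
    have hq2 : 12*b₀*Real.pi^2 ≤ q := by
      rw [hqdef, le_div_iff_of_neg h4b]
      nlinarith
    have hlb : ∀ r ∈ S, -4*b₀*Real.pi^2 - b₁^2/(4*b₀) ≤ r := by
      intro r hr
      obtain ⟨k, hk, hcase⟩ := hclass r hr
      have hk2 := hk1 k hk
      rcases hcase with rfl | rfl
      · nlinarith [mul_nonneg (sub_nonneg.mpr hk2) (le_of_lt hApos)]
      · have : -b₁^2/(4*b₀) = -q := by rw [hqdef]; ring
        rw [this]
        have : b₁^2/(4*b₀) = q := hqdef.symm
        rw [this]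
        nlinarith [mul_nonneg (sub_nonneg.mpr hk2) (le_of_lt hApos)]
    exact IsLeast.csInf_eq ⟨hmemB, hlb⟩
  · intro hgt
    have hb1sq : 48*b₀^2*Real.pi^2 < b₁^2 := by
      have hnn : 0 ≤ -4*Real.sqrt 3*b₀*Real.pi := by nlinarith [mul_nonneg (mul_nonneg h3nn (le_of_lt (neg_pos.mpr hb₀))) (le_of_lt hπ)]
      have h1 : (-4*Real.sqrt 3*b₀*Real.pi) * (-4*Real.sqrt 3*b₀*Real.pi) < |b₁| * |b₁| :=
        mul_self_lt_mul_self hnn hgt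
      nlinarith [h1, _root_.sq_abs b₁, h3]
    have hq2 : q ≤ 12*b₀*Real.pi^2 := by
      rw [hqdef, div_le_iff_of_neg h4b]
      nlinarith
    have hlb : ∀ r ∈ S, -16*b₀*Real.pi^2 ≤ r := by
      intro r hr
      obtain ⟨k, hk, hcase⟩ := hclass r hr
      have hk2 := hk1 k hk
      rcases hcase with rfl | rfl
      · nlinarith [mul_nonneg (sub_nonneg.mpr hk2) (le_of_lt hApos)]
      · have hrw : -b₁^2/(4*b₀) = -q := by rw [hqdef]; ring
        rw [hrw]
        nlinarith [mul_nonneg (sub_nonneg.mpr hk2) (le_of_lt hApos)]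
    exact IsLeast.csInf_eq ⟨hmemA, hlb⟩
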